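/- Let ξ₁,…,ξ_k be nonzero vectors in ℝ^d satisfying: (i) no d of them are linearly dependent; (ii) there is no ω ∈ ℝ^d with ⟨ω,ξᵢ⟩ > 0 for all i. Then for any real numbers f(ξ₁),…,f(ξ_k), min_{γ∈ℝ^d} max_i [f(ξᵢ) − ⟨ξᵢ,γ⟩] equals the maximum of Σᵢ pᵢ f(ξᵢ) over all extreme points p = (p₁,…,p_k) of the convex set of risk-neutral probability laws on {ξ₁,…,ξ_k}. -/

import Mathlib

noncomputable section

/-- Standard inner product on ℝ^d. -/
def dotp {d : ℕ} (u v : Fin d → ℝ) : ℝ := ∑ i, u i * v i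

open Finset RealInnerProductSpace in

lemma gordan {F : Type*} [NormedAddCommGroup F] [InnerProductSpace ℝ F] [CompleteSpace F]
    {n : ℕ} (v : Fin n → F) (s : Finset (Fin n)) (hs : s.Nonempty)
    (h : ¬ ∃ ω : F, ∀ i ∈ s, 0 < ⟪v i, ω⟫) :
    ∃ q : Fin n → ℝ, (∀ i, 0 ≤ q i) ∧ (∀ i, i ∉ s → q i = 0) ∧ ∑ i, q i = 1 ∧
      ∑ i, q i • v i = 0 := by
  classical
  set Δ : Set (Fin n → ℝ) :=
    {q | (∀ i, 0 ≤ q i) ∧ (∀ i, i ∉ s → q i = 0) ∧ ∑ i, q i = 1} with hΔ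
  have hΔclosed : IsClosed Δ := by
    have h1 : IsClosed {q : Fin n → ℝ | ∀ i, 0 ≤ q i} := by
      rw [Set.setOf_forall]
      exact isClosed_iInter fun i => isClosed_le continuous_const (continuous_apply i)
    have h2 : IsClosed {q : Fin n → ℝ | ∀ i, i ∉ s → q i = 0} := by
      rw [Set.setOf_forall]
      refine isClosed_iInter fun i => ?_
      by_cases hi : i ∈ s
      · have : {q : Fin n → ℝ | i ∉ s → q i = 0} = Set.univ := by ext q; simp [hi]
        rw [this]; exact isClosed_univ
      · have : {q : Fin n → ℝ | i ∉ s → q i = 0} = {q | q i = 0} := by ext q; simp [hi]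
        rw [this]; exact isClosed_eq (continuous_apply i) continuous_const
    have h3 : IsClosed {q : Fin n → ℝ | ∑ i, q i = 1} :=
      isClosed_eq (continuous_finset_sum _ fun i _ => continuous_apply i) continuous_const
    have : Δ = {q : Fin n → ℝ | ∀ i, 0 ≤ q i} ∩
        ({q | ∀ i, i ∉ s → q i = 0} ∩ {q | ∑ i, q i = 1}) := by
      ext q; simp [hΔ, Set.mem_setOf_eq, and_assoc]
    rw [this]; exact h1.inter (h2.inter h3)
  have hΔcomp : IsCompact Δ := by
    refine (isCompact_stdSimplex ℝ (Fin n)).of_isClosed_subset hΔclosed ?_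
    intro q hq; exact ⟨hq.1, hq.2.2⟩
  have hΔconv : Convex ℝ Δ := by
    intro x hx y hy a b ha hb hab
    refine ⟨fun i => add_nonneg (mul_nonneg ha (hx.1 i)) (mul_nonneg hb (hy.1 i)),
      fun i hi => ?_, ?_⟩
    · simp [Pi.add_apply, hx.2.1 i hi, hy.2.1 i hi]
    · simp only [Pi.add_apply, Pi.smul_apply, smul_eq_mul]
      rw [Finset.sum_add_distrib, ← Finset.mul_sum, ← Finset.mul_sum, hx.2.2, hy.2.2]
      simpa using hab
  obtain ⟨i₀, hi₀⟩ := hs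
  have hΔne : Δ.Nonempty := by
    refine ⟨fun j => if j = i₀ then 1 else 0, fun i => by positivity, fun i hi => ?_, by simp⟩
    simp [show ¬ i = i₀ from fun h => hi (h ▸ hi₀)]
  set L : (Fin n → ℝ) → F := fun q => ∑ i, q i • v i with hL
  have hLcont : Continuous L :=
    continuous_finset_sum _ fun i _ => (continuous_apply i).smul continuous_const
  have hLaff : ∀ (a b : ℝ) (x y : Fin n → ℝ), L (a • x + b • y) = a • L x + b • L y := by
    intro a b x y
    simp only [hL, Pi.add_apply, Pi.smul_apply, smul_eq_mul, add_smul, mul_smul,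
      Finset.sum_add_distrib, Finset.smul_sum]
  set C : Set F := L '' Δ with hC
  have hCcomp : IsCompact C := hΔcomp.image hLcont
  have hCconv : Convex ℝ C := by
    rintro - ⟨x, hx, rfl⟩ - ⟨y, hy, rfl⟩ a b ha hb hab
    exact ⟨a • x + b • y, hΔconv hx hy ha hb hab, (hLaff a b x y)⟩
  have hCmem : ∀ i ∈ s, v i ∈ C := by
    intro i hi
    refine ⟨fun j => if j = i then 1 else 0, ⟨fun j => by positivity, fun j hj => ?_, by simp⟩, ?_⟩
    · simp [show ¬ j = i from fun h => hj (h ▸ hi)]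
    · simp [hL, ite_smul]
  by_cases h0 : (0 : F) ∈ C
  · obtain ⟨q, hq, hq0⟩ := h0
    exact ⟨q, hq.1, hq.2.1, hq.2.2, hq0⟩
  · exfalso
    obtain ⟨φ, u, hu0, hub⟩ :=
      geometric_hahn_banach_point_closed hCconv hCcomp.isClosed h0
    have hu : 0 < u := by simpa using hu0
    refine h ⟨(InnerProductSpace.toDual ℝ F).symm φ, fun i hi => ?_⟩
    have : u < φ (v i) := hub _ (hCmem i hi)
    rw [real_inner_comm, InnerProductSpace.toDual_symm_apply]
    linarith

open Finset RealInnerProductSpace in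
theorem core {F : Type*} [NormedAddCommGroup F] [InnerProductSpace ℝ F]
    [FiniteDimensional ℝ F] {k : ℕ} (hk : 0 < k) (η : Fin k → F) (f : Fin k → ℝ)
    (hne : ∀ i, η i ≠ 0)
    (hii : ¬ ∃ ω : F, ∀ i, 0 < ⟪η i, ω⟫) :
    ∃ (γ : F) (p : Fin k → ℝ), (∀ i, 0 ≤ p i) ∧ ∑ i, p i = 1 ∧ ∑ i, p i • η i = 0 ∧
      ∀ i, f i - ⟪η i, γ⟫ ≤ ∑ j, p j * f j := by
  classical
  have hkne : Nonempty (Fin k) := ⟨⟨0, hk⟩⟩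
  obtain ⟨p₀, hp₀0, -, hp₀1, hp₀η⟩ := gordan η Finset.univ ⟨⟨0, hk⟩, Finset.mem_univ _⟩
    (by rintro ⟨ω, hω⟩; exact hii ⟨ω, fun i => hω i (Finset.mem_univ i)⟩)
  set D : Set F := {δ | ∀ i, 0 ≤ ⟪η i, δ⟫} with hD
  set T : Finset (Fin k) := Finset.univ.filter (fun i => ∀ δ ∈ D, ⟪η i, δ⟫ = 0) with hT
  have hTmem : ∀ i, i ∈ T ↔ ∀ δ ∈ D, ⟪η i, δ⟫ = 0 := by
    intro i; simp [hT]
  -- choice of directions witnessing i ∉ T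
  have hex' : ∀ i, ∃ δ, δ ∈ D ∧ (i ∉ T → 0 < ⟪η i, δ⟫) := by
    intro i
    by_cases h : i ∈ T
    · exact ⟨0, fun j => by simp, fun h' => absurd h h'⟩
    · rw [hTmem] at h
      push_neg at h
      obtain ⟨δ, hδD, hδne⟩ := h
      exact ⟨δ, hδD, fun _ => lt_of_le_of_ne (hδD i) (Ne.symm hδne)⟩
  choose c hcD hcpos using hex'
  set δs : F := ∑ i, c i with hδs
  have hδsD : δs ∈ D := by
    intro j
    rw [hδs, inner_sum]
    exact Finset.sum_nonneg fun i _ => hcD i j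
  have hδsT0 : ∀ i ∈ T, ⟪η i, δs⟫ = 0 := fun i hi => (hTmem i).1 hi δs hδsD
  have hδspos : ∀ i, i ∉ T → 0 < ⟪η i, δs⟫ := by
    intro i hi
    rw [hδs, inner_sum]
    exact Finset.sum_pos' (fun j _ => hcD j i) ⟨i, Finset.mem_univ i, hcpos i hi⟩
  -- maximality of the face T
  have hTmax : ∀ δ : F, (∀ i ∈ T, 0 ≤ ⟪η i, δ⟫) → ∀ i ∈ T, ⟪η i, δ⟫ = 0 := by
    intro δ hδ
    obtain ⟨M, hM⟩ : ∃ M : ℝ, δ + M • δs ∈ D := by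
      by_cases hTc : ∀ i, i ∈ T
      · exact ⟨0, by intro j; simpa using hδ j (hTc j)⟩
      · push_neg at hTc
        obtain ⟨i₁, hi₁⟩ := hTc
        have hi₁' : i₁ ∈ Finset.univ.filter (· ∉ T) := by simp [hi₁]
        set cm : ℝ := (Finset.univ.filter (· ∉ T)).inf' ⟨i₁, hi₁'⟩
          (fun i => ⟪η i, δs⟫) with hcm
        have hcmpos : 0 < cm := by
          rw [hcm]; refine (Finset.lt_inf'_iff _).2 ?_
          intro i hi
          exact hδspos i (by simpa using hi)
        set A : ℝ := Finset.univ.sup' ⟨i₁, Finset.mem_univ i₁⟩ (fun i => |⟪η i, δ⟫|) with hA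
        have hAnn : 0 ≤ A := le_trans (abs_nonneg _)
          (Finset.le_sup' (fun i => |⟪η i, δ⟫|) (Finset.mem_univ i₁))
        refine ⟨A / cm, fun j => ?_⟩
        rw [inner_add_right, real_inner_smul_right]
        by_cases hj : j ∈ T
        · rw [hδsT0 j hj, mul_zero, add_zero]; exact hδ j hj
        · have h1 : -A ≤ ⟪η j, δ⟫ :=
            neg_le_of_abs_le (Finset.le_sup' (fun i => |⟪η i, δ⟫|) (Finset.mem_univ j))
          have h2 : cm ≤ ⟪η j, δs⟫ := Finset.inf'_le _ (by simp [hj])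
          have h3 : A / cm * cm ≤ A / cm * ⟪η j, δs⟫ :=
            mul_le_mul_of_nonneg_left h2 (div_nonneg hAnn hcmpos.le)
          rw [div_mul_cancel₀ _ hcmpos.ne'] at h3
          linarith
    intro i hi
    have h0 : ⟪η i, δ + M • δs⟫ = 0 := (hTmem i).1 hi _ hM
    rw [inner_add_right, real_inner_smul_right, hδsT0 i hi, mul_zero, add_zero] at h0
    exact h0
  -- support of risk neutral measures is in T
  have hTsupp : ∀ p : Fin k → ℝ, (∀ i, 0 ≤ p i) → ∑ i, p i • η i = 0 →
      ∀ i, p i ≠ 0 → i ∈ T := by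
    intro p hp hpη i hpi
    rw [hTmem]
    intro δ hδ
    have hsum : ∑ j, p j * ⟪η j, δ⟫ = 0 := by
      have h := congrArg (fun x : F => ⟪x, δ⟫) hpη
      simpa [sum_inner, real_inner_smul_left] using h
    have hz := (Finset.sum_eq_zero_iff_of_nonneg
      (fun j _ => mul_nonneg (hp j) (hδ j))).1 hsum i (Finset.mem_univ i)
    exact (mul_eq_zero.1 hz).resolve_left hpi
  have hTne : T.Nonempty := by
    obtain ⟨i, hpi⟩ : ∃ i, p₀ i ≠ 0 := by
      by_contra hcon; push_neg at hcon
      rw [Finset.sum_eq_zero (fun i _ => hcon i)] at hp₀1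
      exact one_ne_zero hp₀1.symm
    exact ⟨i, hTsupp p₀ hp₀0 hp₀η i hpi⟩
  obtain ⟨i₀, hi₀T⟩ := hTne
  -- the span of the T-vectors
  set W : Submodule ℝ F := Submodule.span ℝ (η '' ↑T) with hW
  have hηW : ∀ i ∈ T, η i ∈ W := fun i hi =>
    Submodule.subset_span ⟨i, by simpa using hi, rfl⟩
  have hWzero : ∀ w : W, (∀ i ∈ T, ⟪η i, (w : F)⟫ = 0) → w = 0 := by
    intro w hw
    have hspan : ∀ v ∈ W, ⟪v, (w : F)⟫ = 0 := by
      intro v hv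
      induction hv using Submodule.span_induction with
      | mem x hx =>
        obtain ⟨i, hi, rfl⟩ := hx
        exact hw i (by simpa using hi)
      | zero => simp
      | add x y hx hy ihx ihy => rw [inner_add_left, ihx, ihy, add_zero]
      | smul a x hx ihx => rw [real_inner_smul_left, ihx, mul_zero]
    have h0 : ⟪(w : F), (w : F)⟫ = 0 := hspan _ w.2
    exact Subtype.ext (inner_self_eq_zero.1 h0)
  have hcoerc : ∀ w : W, w ≠ 0 → ∃ i ∈ T, ⟪η i, (w : F)⟫ < 0 := by
    intro w hw
    by_contra hcon; push_neg at hcon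
    exact hw (hWzero w (hTmax _ hcon))
  -- the T-restricted objective
  set gT : F → ℝ := fun γ => T.sup' ⟨i₀, hi₀T⟩ (fun i => f i - ⟪η i, γ⟫) with hgT
  have hgTcont : Continuous gT :=
    Continuous.finset_sup'_apply ⟨i₀, hi₀T⟩ fun i _ =>
      continuous_const.sub ((innerSL ℝ (η i)).continuous)
  -- existence of a global minimiser of gT over W
  obtain ⟨γT, hγTglobal⟩ : ∃ γT : W, ∀ w : W, gT ↑γT ≤ gT ↑w := by
    have hx0 : (⟨η i₀, hηW i₀ hi₀T⟩ : W) ≠ 0 := by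
      intro h
      exact hne i₀ (by simpa using congrArg Subtype.val h)
    have hsphne : (Metric.sphere (0 : W) 1).Nonempty := by
      refine ⟨‖(⟨η i₀, hηW i₀ hi₀T⟩ : W)‖⁻¹ • ⟨η i₀, hηW i₀ hi₀T⟩, ?_⟩
      rw [mem_sphere_zero_iff_norm]
      exact norm_smul_inv_norm hx0
    set μ : W → ℝ := fun w => T.inf' ⟨i₀, hi₀T⟩ fun i => ⟪η i, (w : F)⟫ with hμ
    have hμcont : Continuous μ :=
      Continuous.finset_inf'_apply ⟨i₀, hi₀T⟩ fun i _ =>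
        ((innerSL ℝ (η i)).continuous).comp continuous_subtype_val
    obtain ⟨w₀, hw₀mem, hw₀max⟩ := (isCompact_sphere (0 : W) 1).exists_isMaxOn hsphne
      hμcont.continuousOn
    set cp : ℝ := -μ w₀ with hcp
    have hcppos : 0 < cp := by
      have hw₀ne : w₀ ≠ 0 := by
        intro h
        rw [h, mem_sphere_zero_iff_norm] at hw₀mem
        simp at hw₀mem
      obtain ⟨i, hiT, hlt⟩ := hcoerc w₀ hw₀ne
      have h1 : μ w₀ ≤ ⟪η i, (w₀ : F)⟫ := Finset.inf'_le _ hiT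
      rw [hcp]; linarith
    have hbound : ∀ w : W, ∃ i ∈ T, ⟪η i, (w : F)⟫ ≤ -(cp * ‖w‖) := by
      intro w
      by_cases hw : w = 0
      · exact ⟨i₀, hi₀T, by simp [hw]⟩
      · have hn : (0 : ℝ) < ‖w‖ := norm_pos_iff.2 hw
        have hmem : (‖w‖⁻¹ • w) ∈ Metric.sphere (0 : W) 1 := by
          rw [mem_sphere_zero_iff_norm]; exact norm_smul_inv_norm hw
        have hle : μ (‖w‖⁻¹ • w) ≤ -cp := by
          have := hw₀max hmem
          rw [hcp]; simpa using this
        obtain ⟨i, hiT, hieq⟩ := Finset.exists_mem_eq_inf' ⟨i₀, hi₀T⟩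
          (fun i => ⟪η i, ((‖w‖⁻¹ • w : W) : F)⟫)
        refine ⟨i, hiT, ?_⟩
        have h1 : ⟪η i, ((‖w‖⁻¹ • w : W) : F)⟫ ≤ -cp := by
          rw [hμ] at hle; rw [← hieq]; exact hle
        rw [Submodule.coe_smul, real_inner_smul_right] at h1
        have h2 := mul_le_mul_of_nonneg_left h1 hn.le
        rw [← mul_assoc, mul_inv_cancel₀ hn.ne', one_mul] at h2
        nlinarith
    set fmin : ℝ := T.inf' ⟨i₀, hi₀T⟩ f with hfmin
    set R : ℝ := max 0 ((gT 0 - fmin) / cp) with hR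
    have hRnn : (0 : ℝ) ≤ R := le_max_left _ _
    have hballne : (Metric.closedBall (0 : W) R).Nonempty := ⟨0, by simp [hRnn]⟩
    obtain ⟨γT, hγTmem, hγTmin⟩ := (isCompact_closedBall (0 : W) R).exists_isMinOn hballne
      (f := fun w : W => gT ↑w) (hgTcont.comp continuous_subtype_val).continuousOn
    refine ⟨γT, fun w => ?_⟩
    by_cases hw : w ∈ Metric.closedBall (0 : W) R
    · exact hγTmin hw
    · have hnorm : R < ‖w‖ := by
        simpa [Metric.mem_closedBall, dist_zero_right, not_le] using hw
      obtain ⟨i, hiT, hib⟩ := hbound w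
      have h1 : fmin + cp * ‖w‖ ≤ gT ↑w := by
        have hs1 : f i - ⟪η i, (w : F)⟫ ≤ gT ↑w :=
          Finset.le_sup' (fun i => f i - ⟪η i, ((w : W) : F)⟫) hiT
        have hs2 : fmin ≤ f i := Finset.inf'_le _ hiT
        linarith
      have h2 : gT 0 < fmin + cp * ‖w‖ := by
        have hq : (gT 0 - fmin) / cp < ‖w‖ := lt_of_le_of_lt (le_max_right _ _) hnorm
        have := (div_lt_iff₀ hcppos).1 hq
        nlinarith
      have h3 : gT ↑γT ≤ gT ↑(0 : W) := hγTmin (by simp [hRnn] : (0:W) ∈ Metric.closedBall (0:W) R)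
      have h4 : gT ↑(0 : W) = gT 0 := by norm_num
      linarith
  set gV : ℝ := gT ↑γT with hgV
  -- the argmax face
  set I : Finset (Fin k) := T.filter (fun i => gV = f i - ⟪η i, (↑γT : F)⟫) with hI
  have hIT : I ⊆ T := Finset.filter_subset _ _
  have hIne : I.Nonempty := by
    obtain ⟨i, hiT, hieq⟩ := Finset.exists_mem_eq_sup' ⟨i₀, hi₀T⟩
      (fun i => f i - ⟪η i, (↑γT : F)⟫)
    exact ⟨i, Finset.mem_filter.2 ⟨hiT, hieq⟩⟩
  set ηW : Fin k → W := fun i => if h : i ∈ T then ⟨η i, hηW i h⟩ else 0 with hηWdef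
  have hsep : ¬ ∃ ω : W, ∀ i ∈ I, 0 < ⟪ηW i, ω⟫ := by
    rintro ⟨ω, hω⟩
    have hωF : ∀ i ∈ I, 0 < ⟪η i, (ω : F)⟫ := by
      intro i hi
      have h := hω i hi
      rw [hηWdef] at h
      simp only [dif_pos (hIT hi)] at h
      rwa [Submodule.coe_inner] at h
    set εf : Fin k → ℝ := fun i => if i ∈ I then 1
      else (gV - (f i - ⟪η i, (↑γT : F)⟫)) / (|⟪η i, (↑ω : F)⟫| + 1) with hεf
    have hval : ∀ i ∈ T, i ∉ I → f i - ⟪η i, (↑γT : F)⟫ < gV := by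
      intro i hiT hiI
      refine lt_of_le_of_ne ?_ (fun h => hiI (Finset.mem_filter.2 ⟨hiT, h.symm⟩))
      rw [hgV, hgT]
      exact Finset.le_sup' (fun i => f i - ⟪η i, (↑γT : F)⟫) hiT
    have hεfpos : ∀ i ∈ T, 0 < εf i := by
      intro i hiT
      rw [hεf]; dsimp only
      by_cases hiI : i ∈ I
      · simp [hiI]
      · rw [if_neg hiI]
        apply div_pos
        · linarith [hval i hiT hiI]
        · positivity
    set εm : ℝ := T.inf' ⟨i₀, hi₀T⟩ εf with hεm
    have hεmpos : 0 < εm := by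
      rw [hεm]; refine (Finset.lt_inf'_iff _).2 ?_
      exact fun i hi => hεfpos i hi
    have hkey : ∀ i ∈ T, f i - ⟪η i, ((γT + εm • ω : W) : F)⟫ < gV := by
      intro i hiT
      have hcoe : ((γT + εm • ω : W) : F) = (↑γT : F) + εm • (↑ω : F) := by simp
      rw [hcoe, inner_add_right, real_inner_smul_right]
      by_cases hiI : i ∈ I
      · have hv : gV = f i - ⟪η i, (↑γT : F)⟫ := (Finset.mem_filter.1 hiI).2
        have := mul_pos hεmpos (hωF i hiI)
        linarith
      · have hεle : εm ≤ εf i := Finset.inf'_le _ hiT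
        have hlt : f i - ⟪η i, (↑γT : F)⟫ < gV := hval i hiT hiI
        have habs : -(εm * ⟪η i, (↑ω : F)⟫) ≤ εm * |⟪η i, (↑ω : F)⟫| := by
          rw [← mul_neg]
          exact mul_le_mul_of_nonneg_left (neg_le_abs _) hεmpos.le
        have hstep : εm * (|⟪η i, (↑ω : F)⟫| + 1) ≤ εf i * (|⟪η i, (↑ω : F)⟫| + 1) :=
          mul_le_mul_of_nonneg_right hεle (by positivity)
        have heq : εf i * (|⟪η i, (↑ω : F)⟫| + 1) = gV - (f i - ⟪η i, (↑γT : F)⟫) := by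
          rw [hεf]; dsimp only; rw [if_neg hiI, div_mul_cancel₀]
          positivity
        nlinarith
    have hlt2 : T.sup' ⟨i₀, hi₀T⟩ (fun i => f i - ⟪η i, ((γT + εm • ω : W) : F)⟫) < gV :=
      (Finset.sup'_lt_iff _).2 hkey
    have hge : gV ≤ T.sup' ⟨i₀, hi₀T⟩ (fun i => f i - ⟪η i, ((γT + εm • ω : W) : F)⟫) := by
      simpa only [hgT] using hγTglobal (γT + εm • ω)
    linarith
  obtain ⟨q, hq0, hqsupp, hq1, hqη⟩ := gordan ηW I hIne hsep
  -- transfer the combination to F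
  -- the value of q is gV
  -- build the final γ
  have hqηF : ∑ i, q i • η i = 0 := by
    have h : ((∑ i, q i • ηW i : W) : F) = 0 := by rw [hqη]; rfl
    rw [Submodule.coe_sum] at h
    rw [← h]
    refine Finset.sum_congr rfl fun i _ => ?_
    by_cases hqi : q i = 0
    · simp [hqi]
    · have hiI : i ∈ I := by by_contra hcon; exact hqi (hqsupp i hcon)
      rw [Submodule.coe_smul, hηWdef]
      simp [dif_pos (hIT hiI)]
  have hqval : ∑ j, q j * f j = gV := by
    have h1 : ∀ j, q j * f j = q j * gV + q j * ⟪η j, (↑γT : F)⟫ := by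
      intro j
      by_cases hqj : q j = 0
      · simp [hqj]
      · have hjI : j ∈ I := by by_contra hcon; exact hqj (hqsupp j hcon)
        have hv : gV = f j - ⟪η j, (↑γT : F)⟫ := (Finset.mem_filter.1 hjI).2
        have hf : f j = gV + ⟪η j, (↑γT : F)⟫ := by linarith
        rw [hf]; ring
    rw [Finset.sum_congr rfl (fun j _ => h1 j), Finset.sum_add_distrib]
    have h2 : ∑ j, q j * gV = gV := by rw [← Finset.sum_mul, hq1, one_mul]
    have h3 : ∑ j, q j * ⟪η j, (↑γT : F)⟫ = 0 := by
      have h := congrArg (fun x : F => ⟪x, (↑γT : F)⟫) hqηF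
      simpa [sum_inner, real_inner_smul_left] using h
    rw [h2, h3, add_zero]
  obtain ⟨Ms, hMs⟩ : ∃ Ms : ℝ, ∀ i, i ∉ T → f i - ⟪η i, (↑γT : F)⟫ - Ms * ⟪η i, δs⟫ ≤ gV := by
    set Ms := Finset.univ.sup' ⟨i₀, Finset.mem_univ i₀⟩
      (fun i => if i ∈ T then 0 else (f i - ⟪η i, (↑γT : F)⟫ - gV) / ⟪η i, δs⟫) with hMsdef
    refine ⟨Ms, fun i hiT => ?_⟩
    have hpos := hδspos i hiT
    have hle : (f i - ⟪η i, (↑γT : F)⟫ - gV) / ⟪η i, δs⟫ ≤ Ms := by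
      have h := Finset.le_sup' (fun i => if i ∈ T then 0
        else (f i - ⟪η i, (↑γT : F)⟫ - gV) / ⟪η i, δs⟫) (Finset.mem_univ i)
      rw [if_neg hiT] at h
      exact h
    have h2 := mul_le_mul_of_nonneg_right hle hpos.le
    rw [div_mul_cancel₀ _ hpos.ne'] at h2
    linarith
  refine ⟨↑γT + Ms • δs, q, hq0, hq1, hqηF, fun i => ?_⟩
  rw [hqval, inner_add_right, real_inner_smul_right]
  by_cases hiT : i ∈ T
  · rw [hδsT0 i hiT, mul_zero, add_zero]
    exact Finset.le_sup' (fun i => f i - ⟪η i, (↑γT : F)⟫) hiT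
  · have := hMs i hiT
    linarith


open Finset RealInnerProductSpace in

theorem stmt8 (d k : ℕ) (ξ : Fin k → (Fin d → ℝ)) (f : Fin k → ℝ)
    (hne : ∀ i, ξ i ≠ 0)
    -- (i): no d of the vectors are linearly dependent
    (hi : ∀ s : Finset (Fin k), s.card = d → LinearIndependent ℝ (fun i : s => ξ i))
    -- (ii): no ω has positive inner product with all the ξᵢ
    (hii : ¬ ∃ ω : Fin d → ℝ, ∀ i, 0 < dotp ω (ξ i)) :
    -- the convex set of risk-neutral probability laws on {ξ₁,…,ξ_k}
    let RN : Set (Fin k → ℝ) :=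
      { p | (∀ i, 0 ≤ p i) ∧ (∑ i, p i = 1) ∧ (∑ i, p i • ξ i = 0) }
    ∃ V : ℝ,
      IsLeast (Set.range fun γ : Fin d → ℝ => ⨆ i, (f i - dotp (ξ i) γ)) V ∧
      IsGreatest ((fun p : Fin k → ℝ => ∑ i, p i * f i) '' RN.extremePoints ℝ) V := by
  intro RN
  classical
  have hk : 0 < k := by
    rcases Nat.eq_zero_or_pos k with h | h
    · subst h
      exact absurd ⟨0, fun i => i.elim0⟩ hii
    · exact h
  have hkne : Nonempty (Fin k) := ⟨⟨0, hk⟩⟩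
  set Lq : (Fin d → ℝ) ≃ₗ[ℝ] EuclideanSpace ℝ (Fin d) :=
    (WithLp.linearEquiv 2 ℝ (Fin d → ℝ)).symm with hLq
  set η : Fin k → EuclideanSpace ℝ (Fin d) := fun i => Lq (ξ i) with hη
  have hdot : ∀ u v : Fin d → ℝ, dotp u v = ⟪Lq u, Lq v⟫ := by
    intro u v
    simp [dotp, hLq, PiLp.inner_apply, RCLike.inner_apply, WithLp.linearEquiv]
    exact Finset.sum_congr rfl fun i _ => mul_comm _ _
  have hηne : ∀ i, η i ≠ 0 := by
    intro i h
    exact hne i (by simpa using (LinearEquiv.map_eq_zero_iff Lq).1 h)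
  have hηii : ¬ ∃ ω : EuclideanSpace ℝ (Fin d), ∀ i, 0 < ⟪η i, ω⟫ := by
    rintro ⟨ω, hω⟩
    refine hii ⟨Lq.symm ω, fun i => ?_⟩
    rw [hdot, LinearEquiv.apply_symm_apply, real_inner_comm]
    exact hω i
  -- RN in terms of η
  have hsum : ∀ p : Fin k → ℝ, ∑ i, p i • η i = Lq (∑ i, p i • ξ i) := by
    intro p
    rw [map_sum]
    simp [hη]
  have hRNdef : ∀ p : Fin k → ℝ, p ∈ RN ↔
      (∀ i, 0 ≤ p i) ∧ (∑ i, p i = 1) ∧ (∑ i, p i • ξ i = 0) := fun p => Iff.rfl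
  -- dotp bilinearity
  have hdlin : ∀ (p : Fin k → ℝ) (γ : Fin d → ℝ),
      dotp (∑ i, p i • ξ i) γ = ∑ i, p i * dotp (ξ i) γ := by
    intro p γ
    simp only [dotp, Finset.sum_apply, Pi.smul_apply, smul_eq_mul, Finset.sum_mul,
      Finset.mul_sum, mul_assoc]
    rw [Finset.sum_comm]
  -- apply the core theorem
  obtain ⟨γs, p₁, hp₁0, hp₁1, hp₁η, hγs⟩ := core hk η f hηne hηii
  have hp₁RN : p₁ ∈ RN := by
    refine ⟨hp₁0, hp₁1, ?_⟩
    have := hp₁η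
    rw [hsum] at this
    simpa using (LinearEquiv.map_eq_zero_iff Lq).1 this
  -- compactness of RN
  have hRNsub : RN ⊆ stdSimplex ℝ (Fin k) := fun p hp => ⟨hp.1, hp.2.1⟩
  have hRNclosed : IsClosed RN := by
    have h1 : IsClosed {p : Fin k → ℝ | ∀ i, 0 ≤ p i} := by
      rw [Set.setOf_forall]
      exact isClosed_iInter fun i => isClosed_le continuous_const (continuous_apply i)
    have h2 : IsClosed {p : Fin k → ℝ | ∑ i, p i = 1} :=
      isClosed_eq (continuous_finset_sum _ fun i _ => continuous_apply i) continuous_const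
    have h3 : IsClosed {p : Fin k → ℝ | ∑ i, p i • ξ i = 0} :=
      isClosed_eq (continuous_finset_sum _ fun i _ => (continuous_apply i).smul
        continuous_const) continuous_const
    have : RN = {p : Fin k → ℝ | ∀ i, 0 ≤ p i} ∩
        ({p | ∑ i, p i = 1} ∩ {p | ∑ i, p i • ξ i = 0}) := by
      ext p; simp [hRNdef, Set.mem_setOf_eq, and_assoc]
    rw [this]
    exact h1.inter (h2.inter h3)
  have hRNcomp : IsCompact RN :=
    (isCompact_stdSimplex ℝ (Fin k)).of_isClosed_subset hRNclosed hRNsub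
  have hRNconv : Convex ℝ RN := by
    intro x hx y hy a b ha hb hab
    refine ⟨fun i => add_nonneg (mul_nonneg ha (hx.1 i)) (mul_nonneg hb (hy.1 i)), ?_, ?_⟩
    · simp only [Pi.add_apply, Pi.smul_apply, smul_eq_mul]
      rw [Finset.sum_add_distrib, ← Finset.mul_sum, ← Finset.mul_sum, hx.2.1, hy.2.1]
      simpa using hab
    · simp only [Pi.add_apply, Pi.smul_apply, smul_eq_mul, add_smul, mul_smul,
        Finset.sum_add_distrib]
      rw [← Finset.smul_sum, ← Finset.smul_sum, hx.2.2, hy.2.2]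
      simp
  -- the objective functional, as a continuous linear map
  set lC : (Fin k → ℝ) →L[ℝ] ℝ := ∑ i, f i • (ContinuousLinearMap.proj i) with hlC
  have hlCapp : ∀ p : Fin k → ℝ, lC p = ∑ i, p i * f i := by
    intro p
    simp [hlC, ContinuousLinearMap.sum_apply, mul_comm]
  -- the maximum over RN
  obtain ⟨V, hVmem, hVub⟩ := (hRNcomp.image lC.continuous).exists_isGreatest
    (Set.Nonempty.image _ ⟨p₁, hp₁RN⟩)

  obtain ⟨phat, hphatRN, hphatV⟩ := hVmem
  have hub : ∀ p ∈ RN, ∑ i, p i * f i ≤ V := by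
    intro p hp
    have h := hVub ⟨p, hp, rfl⟩
    rwa [hlCapp] at h
  have hweak : ∀ γ : Fin d → ℝ, V ≤ ⨆ i, (f i - dotp (ξ i) γ) := by
    intro γ
    have hbdd : BddAbove (Set.range fun i => f i - dotp (ξ i) γ) :=
      Set.Finite.bddAbove (Set.finite_range _)
    have hle : ∀ i, f i - dotp (ξ i) γ ≤ ⨆ i, (f i - dotp (ξ i) γ) :=
      fun i => le_ciSup hbdd i
    have hzero : ∑ i, phat i * dotp (ξ i) γ = 0 := by
      rw [← hdlin, hphatRN.2.2]
      simp [dotp]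
    have h1 : V = ∑ i, phat i * f i := by rw [← hphatV, hlCapp]
    calc V = ∑ i, phat i * (f i - dotp (ξ i) γ) + ∑ i, phat i * dotp (ξ i) γ := by
            rw [h1, ← Finset.sum_add_distrib]
            exact Finset.sum_congr rfl fun i _ => by ring
      _ = ∑ i, phat i * (f i - dotp (ξ i) γ) := by rw [hzero, add_zero]
      _ ≤ ∑ i, phat i * (⨆ i, (f i - dotp (ξ i) γ)) :=
            Finset.sum_le_sum fun i _ => mul_le_mul_of_nonneg_left (hle i) (hphatRN.1 i)
      _ = ⨆ i, (f i - dotp (ξ i) γ) := by rw [← Finset.sum_mul, hphatRN.2.1, one_mul]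
  refine ⟨V, ⟨⟨Lq.symm γs, ?_⟩, ?_⟩, ?_, ?_⟩
  · apply le_antisymm
    · refine ciSup_le fun i => ?_
      have h := hγs i
      rw [hdot (ξ i) (Lq.symm γs), LinearEquiv.apply_symm_apply]
      exact le_trans h (le_trans (le_of_eq rfl) (hub p₁ hp₁RN))
    · exact hweak _
  · rintro x ⟨γ, rfl⟩
    exact hweak γ
  · set M : Set (Fin k → ℝ) := {x ∈ RN | ∀ y ∈ RN, lC y ≤ lC x} with hM
    have hMexp : IsExposed ℝ RN M := fun _ => ⟨lC, rfl⟩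
    have hMne : M.Nonempty := ⟨phat, hphatRN, fun y hy => by
      have h1 : lC y ≤ V := hVub ⟨y, hy, rfl⟩
      rw [hphatV]; exact h1⟩
    have hMcomp : IsCompact M := hMexp.isCompact hRNcomp
    obtain ⟨z, hz⟩ := hMcomp.extremePoints_nonempty hMne
    have hzM : z ∈ M := extremePoints_subset hz
    have hzRN : z ∈ RN := hzM.1
    have hzV : lC z = V := by
      refine le_antisymm (hVub ⟨z, hzRN, rfl⟩) ?_
      rw [← hphatV]
      exact hzM.2 phat hphatRN
    refine ⟨z, hMexp.isExtreme.extremePoints_subset_extremePoints hz, ?_⟩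
    show ∑ i, z i * f i = V
    rw [← hlCapp]
    exact hzV
  · rintro x ⟨p, hp, rfl⟩
    have : p ∈ RN := extremePoints_subset hp
    exact hub p this
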